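/- Let λ ∈ (0, λ_max] and let j ∈ {1,…,p}. If |⟨θ*_λ, x̄^j⟩| < mλ, then every minimizer (β, c) ∈ ℝ^p × ℝ of LRP_λ satisfies β_j = 0. -/

import Mathlib

/-- The dual objective `g(θ) = (1/m) Σ_i [θ_i log θ_i + (1−θ_i) log(1−θ_i)]`. -/
noncomputable def g (m : ℕ) (θ : Fin m → ℝ) : ℝ :=
  (1 / (m : ℝ)) * ∑ i, (θ i * Real.log (θ i) + (1 - θ i) * Real.log (1 - θ i))

/-- The gradient of `g`, componentwise `(1/m) log(θ_i/(1−θ_i))`. -/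
noncomputable def gradg (m : ℕ) (θ : Fin m → ℝ) : Fin m → ℝ :=
  fun i => (1 / (m : ℝ)) * Real.log (θ i / (1 - θ i))
/-- The dual feasible set `F_λ`: componentwise in `(0,1)`, `|⟨θ, x̄^j⟩| ≤ mλ` for all
columns `x̄^j = X j`, and `⟨θ, b⟩ = 0`. -/
def Feas (m p : ℕ) (X : Fin p → Fin m → ℝ) (b : Fin m → ℝ) (lam : ℝ) :
    Set (Fin m → ℝ) :=
  {θ | (∀ i, 0 < θ i ∧ θ i < 1) ∧ (∀ j, |∑ i, θ i * X j i| ≤ (m : ℝ) * lam) ∧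
    ∑ i, θ i * b i = 0}
open scoped Classical in
/-- `m⁺ = #{i : b_i = 1}`. -/
noncomputable def mPlus (m : ℕ) (b : Fin m → ℝ) : ℕ :=
  (Finset.univ.filter (fun i => b i = 1)).card

open scoped Classical in
/-- `m⁻ = #{i : b_i = −1}`. -/
noncomputable def mMinus (m : ℕ) (b : Fin m → ℝ) : ℕ :=
  (Finset.univ.filter (fun i => b i = -1)).card

open scoped Classical in
/-- `θ_max`, with `(θ_max)_i = m⁻/m` if `b_i = 1` and `m⁺/m` if `b_i = −1`. -/
noncomputable def thetaMax (m : ℕ) (b : Fin m → ℝ) : Fin m → ℝ :=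
  fun i => if b i = 1 then (mMinus m b : ℝ) / m else (mPlus m b : ℝ) / m

/-- `λ_max = (1/m) max_j |⟨θ_max, x̄^j⟩|`. -/
noncomputable def lamMax (m p : ℕ) (X : Fin p → Fin m → ℝ) (b : Fin m → ℝ) : ℝ :=
  (1 / (m : ℝ)) * ⨆ j : Fin p, |∑ i, thetaMax m b i * X j i|
/-- The ℓ1-regularized logistic regression objective `LRP_λ`:
`(1/m) Σ_i log(1 + exp(−⟨β, x̄_i⟩ − b_i c)) + λ‖β‖₁`, where the rows are
`(x̄_i)_j = X j i`. -/
noncomputable def LRP (m p : ℕ) (X : Fin p → Fin m → ℝ) (b : Fin m → ℝ) (lam : ℝ)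
    (β : Fin p → ℝ) (c : ℝ) : ℝ :=
  (1 / (m : ℝ)) * ∑ i, Real.log (1 + Real.exp (-(∑ j, β j * X j i) - b i * c))
    + lam * ∑ j, |β j|


open Filter in
lemma aux_hasDerivAt (m : ℕ) (a v : Fin m → ℝ) (t₀ : ℝ) :
    HasDerivAt (fun t : ℝ => ∑ i, Real.log (1 + Real.exp (a i - v i * t)))
      (∑ i, -(v i) * (Real.exp (a i - v i * t₀) / (1 + Real.exp (a i - v i * t₀)))) t₀ := by
  apply HasDerivAt.fun_sum
  intro i _
  have h1 : HasDerivAt (fun t : ℝ => a i - v i * t) (-(v i)) t₀ := by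
    simpa using ((hasDerivAt_id t₀).const_mul (v i)).const_sub (a i)
  have h2 := (h1.exp).const_add 1
  have h3 := h2.log (by positivity)
  exact h3.congr_deriv (by ring)

open Filter in
lemma abs_deriv_le_of_min {f : ℝ → ℝ} {d lam : ℝ} (hf : HasDerivAt f d 0)
    (h : ∀ t, f 0 ≤ f t + lam * |t|) : |d| ≤ lam := by
  have hs := hasDerivAt_iff_tendsto_slope.mp hf
  rw [abs_le]
  constructor
  · have h1 : Tendsto (slope f 0) (nhdsWithin 0 (Set.Ioi 0)) (nhds d) :=
      hs.mono_left (nhdsWithin_mono _ (fun x hx => ne_of_gt hx))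
    refine ge_of_tendsto h1 ?_
    filter_upwards [self_mem_nhdsWithin] with t ht
    have ht' : (0:ℝ) < t := ht
    have h2 := h t
    rw [abs_of_pos ht'] at h2
    have hsl : slope f 0 t = (f t - f 0) / t := by simp [slope_def_field]
    rw [hsl, le_div_iff₀ ht']
    linarith
  · have h1 : Tendsto (slope f 0) (nhdsWithin 0 (Set.Iio 0)) (nhds d) :=
      hs.mono_left (nhdsWithin_mono _ (fun x hx => ne_of_lt hx))
    refine le_of_tendsto h1 ?_
    filter_upwards [self_mem_nhdsWithin] with t ht
    have ht' : t < (0:ℝ) := ht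
    have h2 := h t
    rw [abs_of_neg ht'] at h2
    have hsl : slope f 0 t = (f t - f 0) / t := by simp [slope_def_field]
    rw [hsl, div_le_iff_of_neg ht']
    linarith

lemma ent_pt_strict {a t : ℝ} (ha : 0 < a) (ha1 : a < 1) (ht : 0 < t) (ht1 : t < 1)
    (hne : t ≠ a) :
    Real.log (a / (1 - a)) * (t - a) <
      (t * Real.log t + (1 - t) * Real.log (1 - t))
        - (a * Real.log a + (1 - a) * Real.log (1 - a)) := by
  have h1a : 0 < 1 - a := by linarith
  have h1t : 0 < 1 - t := by linarith
  have e1 : Real.log (a / (1 - a)) = Real.log a - Real.log (1 - a) :=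
    Real.log_div ha.ne' h1a.ne'
  have k1 : t - a < t * (Real.log t - Real.log a) := by
    have hd : Real.log (a / t) < a / t - 1 := by
      apply Real.log_lt_sub_one_of_pos (div_pos ha ht)
      intro h
      apply hne
      field_simp at h
      linarith
    rw [Real.log_div ha.ne' ht.ne'] at hd
    have h2 := mul_lt_mul_of_pos_left hd ht
    have e : t * (a / t - 1) = a - t := by field_simp
    nlinarith
  have k2 : a - t ≤ (1 - t) * (Real.log (1 - t) - Real.log (1 - a)) := by
    have hd : Real.log ((1 - a) / (1 - t)) ≤ (1 - a) / (1 - t) - 1 :=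
      Real.log_le_sub_one_of_pos (div_pos h1a h1t)
    rw [Real.log_div h1a.ne' h1t.ne'] at hd
    have h2 := mul_le_mul_of_nonneg_left hd h1t.le
    have e : (1 - t) * ((1 - a) / (1 - t) - 1) = t - a := by field_simp; ring
    nlinarith
  rw [e1]
  nlinarith

lemma ent_pt {a t : ℝ} (ha : 0 < a) (ha1 : a < 1) (ht : 0 < t) (ht1 : t < 1) :
    Real.log (a / (1 - a)) * (t - a) ≤
      (t * Real.log t + (1 - t) * Real.log (1 - t))
        - (a * Real.log a + (1 - a) * Real.log (1 - a)) := by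
  rcases eq_or_ne t a with h | h
  · subst h; simp
  · exact (ent_pt_strict ha ha1 ht ht1 h).le

lemma LRP_update (m p : ℕ) (X : Fin p → Fin m → ℝ) (b : Fin m → ℝ) (lam : ℝ)
    (β : Fin p → ℝ) (c : ℝ) (j : Fin p) (t : ℝ) :
    LRP m p X b lam (fun k => β k + (if k = j then 1 else 0) * t) c
      = (1 / (m : ℝ)) *
          ∑ i, Real.log (1 + Real.exp ((-(∑ k, β k * X k i) - b i * c) - X j i * t))
        + lam * (|β j + t| + ∑ k ∈ Finset.univ.erase j, |β k|) := by
  unfold LRP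
  congr 1
  · congr 1
    apply Finset.sum_congr rfl
    intro i _
    have h : (∑ k, (β k + (if k = j then 1 else 0) * t) * X k i)
        = (∑ k, β k * X k i) + X j i * t := by
      rw [Finset.sum_congr rfl (fun k _ => add_mul (β k) _ (X k i)),
        Finset.sum_add_distrib]
      congr 1
      rw [Finset.sum_eq_single j (fun k _ hk => by simp [hk]) (by simp)]
      simp [mul_comm]
    rw [h]
    have h2 : -((∑ k, β k * X k i) + X j i * t) - b i * c
        = (-(∑ k, β k * X k i) - b i * c) - X j i * t := by ring
    rw [h2]
  · congr 1
    rw [← Finset.add_sum_erase _ (fun k => |β k + (if k = j then 1 else 0) * t|)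
      (Finset.mem_univ j)]
    congr 1
    · simp
    · exact Finset.sum_congr rfl (fun k hk => by simp [Finset.ne_of_mem_erase hk])

/-- Rule (R1): for `λ ∈ (0, λ_max]` and a feature `j`, if `|⟨θ*_λ, x̄^j⟩| < mλ`,
then every minimizer `(β, c)` of `LRP_λ` satisfies `β_j = 0`. -/
theorem slores_kkt_screening (m p : ℕ) (hm : 1 ≤ m) (hp : 1 ≤ p)
    (X : Fin p → Fin m → ℝ) (b : Fin m → ℝ) (hb : ∀ i, b i = 1 ∨ b i = -1)
    (hmp : 1 ≤ mPlus m b) (hmm : 1 ≤ mMinus m b) (hlmax : 0 < lamMax m p X b)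
    (lam : ℝ) (hlam : 0 < lam) (hle : lam ≤ lamMax m p X b)
    (θs : Fin m → ℝ)
    (hθs : θs ∈ Feas m p X b lam ∧ ∀ θ ∈ Feas m p X b lam, g m θs ≤ g m θ)
    (j : Fin p) (hj : |∑ i, θs i * X j i| < (m : ℝ) * lam)
    (β : Fin p → ℝ) (c : ℝ)
    (hmin : ∀ β' c', LRP m p X b lam β c ≤ LRP m p X b lam β' c') :
    β j = 0 := by
  classical
  by_contra hβj
  obtain ⟨⟨hθ01, hθbd, hθb⟩, hθmin⟩ := hθs
  have hm0 : (0:ℝ) < m := by exact_mod_cast hm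
  have h1m : (0:ℝ) < 1 / (m:ℝ) := by positivity
  set A : Fin m → ℝ := fun i => -(∑ k, β k * X k i) - b i * c with hA
  have hAi : ∀ i, -(∑ k, β k * X k i) - b i * c = A i := fun i => by rw [hA]
  set σ : Fin m → ℝ := fun i => Real.exp (A i) / (1 + Real.exp (A i)) with hσ
  have hσi : ∀ i, Real.exp (A i) / (1 + Real.exp (A i)) = σ i := fun i => by rw [hσ]
  have hexp : ∀ i, (0:ℝ) < 1 + Real.exp (A i) := fun i => by positivity
  have hσpos : ∀ i, 0 < σ i := by
    intro i
    simp only [hσ]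
    exact div_pos (Real.exp_pos _) (hexp i)
  have hσlt1 : ∀ i, σ i < 1 := by
    intro i
    simp only [hσ]
    rw [div_lt_one (hexp i)]
    linarith [Real.exp_pos (A i)]
  -- derivative of the smooth part in an arbitrary direction
  have hf : ∀ v : Fin m → ℝ, HasDerivAt
      (fun t => (1/(m:ℝ)) * ∑ i, Real.log (1 + Real.exp (A i - v i * t)))
      ((1/(m:ℝ)) * ∑ i, -(v i) * σ i) 0 := by
    intro v
    have e : (∑ i, -(v i) * (Real.exp (A i - v i * 0) / (1 + Real.exp (A i - v i * 0))))
        = ∑ i, -(v i) * σ i :=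
      Finset.sum_congr rfl (fun i _ => by rw [mul_zero, sub_zero, hσi])
    have h := (aux_hasDerivAt m A v 0).const_mul (1/(m:ℝ))
    rw [e] at h
    exact h
  -- derivative in the intercept direction
  have hcderiv : HasDerivAt (fun c' => LRP m p X b lam β c')
      ((1/(m:ℝ)) * ∑ i, -(b i) * σ i) c := by
    have e : (∑ i, -(b i) * (Real.exp (-(∑ k, β k * X k i) - b i * c)
          / (1 + Real.exp (-(∑ k, β k * X k i) - b i * c))))
        = ∑ i, -(b i) * σ i :=
      Finset.sum_congr rfl (fun i _ => by rw [hAi, hσi])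
    have h := ((aux_hasDerivAt m (fun i => -(∑ k, β k * X k i)) b c).const_mul
      (1/(m:ℝ))).add_const (lam * ∑ k, |β k|)
    beta_reduce at h
    rw [e] at h
    exact h
  have hcmin : IsLocalMin (fun c' => LRP m p X b lam β c') c :=
    Filter.Eventually.of_forall (fun c' => hmin β c')
  have hsum_b : ∑ i, σ i * b i = 0 := by
    have h0 := hcmin.hasDerivAt_eq_zero hcderiv
    have e : ∑ i, -(b i) * σ i = -(∑ i, σ i * b i) := by
      rw [← Finset.sum_neg_distrib]
      exact Finset.sum_congr rfl (fun i _ => by ring)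
    rw [e] at h0
    rcases mul_eq_zero.mp h0 with h | h
    · exact absurd h h1m.ne'
    · linarith
  -- base value of LRP at (β, c), written compatibly with the direction-q function
  have hbase : ∀ (q : Fin p),
      LRP m p X b lam β c
        = (1/(m:ℝ)) * ∑ i, Real.log (1 + Real.exp (A i - X q i * 0))
          + lam * (|β q + 0| + ∑ k ∈ Finset.univ.erase q, |β k|) := by
    intro q
    have h := LRP_update m p X b lam β c q 0
    simp only [hAi] at h
    have hb' : (fun k => β k + (if k = q then 1 else 0) * 0) = β := by
      funext k; simp
    rw [hb'] at h
    exact h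
  -- |⟨σ, x^q⟩| ≤ m λ for every q
  have hbound : ∀ q : Fin p, |∑ i, σ i * X q i| ≤ (m:ℝ) * lam := by
    intro q
    have hmono : ∀ t : ℝ,
        (1/(m:ℝ)) * ∑ i, Real.log (1 + Real.exp (A i - X q i * 0))
          ≤ (1/(m:ℝ)) * ∑ i, Real.log (1 + Real.exp (A i - X q i * t)) + lam * |t| := by
      intro t
      have h1 := hmin (fun k => β k + (if k = q then 1 else 0) * t) c
      rw [LRP_update] at h1
      simp only [hAi] at h1
      rw [hbase q] at h1
      have htri : |β q + t| ≤ |β q| + |t| := abs_add_le _ _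
      have habs0 : |β q + 0| = |β q| := by rw [add_zero]
      nlinarith [abs_nonneg t, hlam.le, mul_le_mul_of_nonneg_left htri hlam.le]
    have hd := abs_deriv_le_of_min (hf (X q)) hmono
    have e : ((1/(m:ℝ)) * ∑ i, -(X q i) * σ i) = (1/(m:ℝ)) * -(∑ i, σ i * X q i) := by
      congr 1
      rw [← Finset.sum_neg_distrib]
      exact Finset.sum_congr rfl (fun i _ => by ring)
    rw [e, abs_mul, abs_neg, abs_of_pos h1m] at hd
    calc |∑ i, σ i * X q i| = (m:ℝ) * ((1/(m:ℝ)) * |∑ i, σ i * X q i|) := by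
          field_simp
      _ ≤ (m:ℝ) * lam := mul_le_mul_of_nonneg_left hd hm0.le
  -- equality for coordinates with β q ≠ 0
  have heq : ∀ q : Fin p, β q ≠ 0 →
      β q * (∑ i, σ i * X q i) = |β q| * ((m:ℝ) * lam) := by
    intro q hq
    have hsumderiv : ∀ (l : ℝ),
        IsLocalMin (fun t => (1/(m:ℝ)) * ∑ i, Real.log (1 + Real.exp (A i - X q i * t))
          + l * t) 0 →
        (∑ i, σ i * X q i) = (m:ℝ) * l := by
      intro l hloc
      have h2 : HasDerivAt (fun t : ℝ => l * t) l 0 := by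
        simpa using (hasDerivAt_id (0:ℝ)).const_mul l
      have hd : HasDerivAt (fun t => (1/(m:ℝ)) * ∑ i, Real.log (1 + Real.exp (A i - X q i * t))
          + l * t) ((1/(m:ℝ)) * ∑ i, -(X q i) * σ i + l) 0 := (hf (X q)).add h2
      have h0 := hloc.hasDerivAt_eq_zero hd
      have e : ((1/(m:ℝ)) * ∑ i, -(X q i) * σ i) = (1/(m:ℝ)) * -(∑ i, σ i * X q i) := by
        congr 1
        rw [← Finset.sum_neg_distrib]
        exact Finset.sum_congr rfl (fun i _ => by ring)
      rw [e] at h0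
      have hmne : (m:ℝ) ≠ 0 := ne_of_gt hm0
      field_simp at h0
      linarith
    rcases lt_or_gt_of_ne hq with hneg | hpos
    · have hloc : IsLocalMin (fun t => (1/(m:ℝ)) * ∑ i,
          Real.log (1 + Real.exp (A i - X q i * t)) + (-lam) * t) 0 := by
        have hnb : Set.Ioo (β q) (-(β q)) ∈ nhds (0:ℝ) := Ioo_mem_nhds hneg (by linarith)
        refine Filter.eventually_of_mem hnb (fun t ht => ?_)
        obtain ⟨ht1, ht2⟩ := ht
        have h1 := hmin (fun k => β k + (if k = q then 1 else 0) * t) c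
        rw [LRP_update] at h1
        simp only [hAi] at h1
        rw [hbase q] at h1
        have habs : |β q + t| = -(β q + t) := abs_of_neg (by linarith)
        have habs2 : |β q + 0| = -(β q) := by rw [add_zero]; exact abs_of_neg hneg
        rw [habs, habs2] at h1
        show (1/(m:ℝ)) * ∑ i, Real.log (1 + Real.exp (A i - X q i * 0)) + (-lam) * 0
          ≤ (1/(m:ℝ)) * ∑ i, Real.log (1 + Real.exp (A i - X q i * t)) + (-lam) * t
        nlinarith [h1]
      have hS := hsumderiv (-lam) hloc
      rw [hS, abs_of_neg hneg]
      ring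
    · have hloc : IsLocalMin (fun t => (1/(m:ℝ)) * ∑ i,
          Real.log (1 + Real.exp (A i - X q i * t)) + lam * t) 0 := by
        have hnb : Set.Ioo (-(β q)) (β q) ∈ nhds (0:ℝ) := Ioo_mem_nhds (by linarith) hpos
        refine Filter.eventually_of_mem hnb (fun t ht => ?_)
        obtain ⟨ht1, ht2⟩ := ht
        have h1 := hmin (fun k => β k + (if k = q then 1 else 0) * t) c
        rw [LRP_update] at h1
        simp only [hAi] at h1
        rw [hbase q] at h1
        have habs : |β q + t| = β q + t := abs_of_pos (by linarith)
        have habs2 : |β q + 0| = β q := by rw [add_zero]; exact abs_of_pos hpos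
        rw [habs, habs2] at h1
        show (1/(m:ℝ)) * ∑ i, Real.log (1 + Real.exp (A i - X q i * 0)) + lam * 0
          ≤ (1/(m:ℝ)) * ∑ i, Real.log (1 + Real.exp (A i - X q i * t)) + lam * t
        nlinarith [h1]
      have hS := hsumderiv lam hloc
      rw [hS, abs_of_pos hpos]
  -- σ is dual feasible
  have hσfeas : σ ∈ Feas m p X b lam := ⟨fun i => ⟨hσpos i, hσlt1 i⟩, hbound, hsum_b⟩
  -- gradient identity
  have hlog : ∀ i, Real.log (σ i / (1 - σ i)) = A i := by
    intro i
    have h1 : (1:ℝ) - σ i = 1 / (1 + Real.exp (A i)) := by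
      simp only [hσ]
      field_simp
      ring
    have h2 : σ i / (1 - σ i) = Real.exp (A i) := by
      rw [h1]
      simp only [hσ]
      rw [div_div_div_eq]
      field_simp
    rw [h2, Real.log_exp]
  have hpt : ∀ i, A i * (θs i - σ i)
      ≤ (θs i * Real.log (θs i) + (1 - θs i) * Real.log (1 - θs i))
        - (σ i * Real.log (σ i) + (1 - σ i) * Real.log (1 - σ i)) := by
    intro i
    rw [← hlog i]
    exact ent_pt (hσpos i) (hσlt1 i) (hθ01 i).1 (hθ01 i).2
  -- expansion of the first-order term
  have e1 : ∑ i, A i * (θs i - σ i)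
      = (∑ q, β q * ((∑ i, σ i * X q i) - (∑ i, θs i * X q i)))
        + c * ((∑ i, σ i * b i) - (∑ i, θs i * b i)) := by
    have step : ∀ i, A i * (θs i - σ i)
        = (∑ q, β q * X q i * (σ i - θs i)) + b i * c * (σ i - θs i) := by
      intro i
      rw [← hAi i, ← Finset.sum_mul]
      ring
    rw [Finset.sum_congr rfl (fun i _ => step i), Finset.sum_add_distrib]
    congr 1
    · rw [Finset.sum_comm]
      apply Finset.sum_congr rfl
      intro q _
      have h3 : ∀ i, β q * X q i * (σ i - θs i)
          = β q * (σ i * X q i - θs i * X q i) := fun i => by ring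
      rw [Finset.sum_congr rfl (fun i _ => h3 i), ← Finset.mul_sum,
        Finset.sum_sub_distrib]
    · have h3 : ∀ i, b i * c * (σ i - θs i) = c * (σ i * b i - θs i * b i) :=
        fun i => by ring
      rw [Finset.sum_congr rfl (fun i _ => h3 i), ← Finset.mul_sum,
        Finset.sum_sub_distrib]
  have hD : 0 ≤ ∑ i, A i * (θs i - σ i) := by
    rw [e1, hsum_b, hθb, sub_zero, mul_zero, add_zero]
    apply Finset.sum_nonneg
    intro q _
    rcases eq_or_ne (β q) 0 with h | h
    · simp [h]
    · rw [mul_sub, heq q h]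
      have h1 : β q * ∑ i, θs i * X q i ≤ |β q| * ((m:ℝ) * lam) := by
        calc β q * ∑ i, θs i * X q i ≤ |β q * ∑ i, θs i * X q i| := le_abs_self _
          _ = |β q| * |∑ i, θs i * X q i| := abs_mul _ _
          _ ≤ |β q| * ((m:ℝ) * lam) :=
              mul_le_mul_of_nonneg_left (hθbd q) (abs_nonneg _)
      linarith
  have hgle : g m θs ≤ g m σ := hθmin σ hσfeas
  have hsum_le : ∑ i, (θs i * Real.log (θs i) + (1 - θs i) * Real.log (1 - θs i))
      ≤ ∑ i, (σ i * Real.log (σ i) + (1 - σ i) * Real.log (1 - σ i)) := by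
    unfold g at hgle
    exact le_of_mul_le_mul_left hgle h1m
  have hterm0 : ∀ i, (θs i * Real.log (θs i) + (1 - θs i) * Real.log (1 - θs i))
      - (σ i * Real.log (σ i) + (1 - σ i) * Real.log (1 - σ i))
      - A i * (θs i - σ i) = 0 := by
    have hsum0 : ∑ i, ((θs i * Real.log (θs i) + (1 - θs i) * Real.log (1 - θs i))
        - (σ i * Real.log (σ i) + (1 - σ i) * Real.log (1 - σ i))
        - A i * (θs i - σ i)) = 0 := by
      apply le_antisymm
      · rw [Finset.sum_sub_distrib, Finset.sum_sub_distrib]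
        linarith
      · exact Finset.sum_nonneg (fun i _ => by linarith [hpt i])
    intro i
    exact (Finset.sum_eq_zero_iff_of_nonneg
      (fun i _ => by linarith [hpt i])).mp hsum0 i (Finset.mem_univ i)
  have hθσ : ∀ i, θs i = σ i := by
    intro i
    by_contra hne
    have hstrict := ent_pt_strict (hσpos i) (hσlt1 i) (hθ01 i).1 (hθ01 i).2 hne
    rw [hlog i] at hstrict
    linarith [hterm0 i]
  have hσj := heq j hβj
  have habsj : |∑ i, σ i * X j i| = (m:ℝ) * lam := by
    have h1 : |β j| * |∑ i, σ i * X j i| = |β j| * ((m:ℝ) * lam) := by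
      rw [← abs_mul, hσj,
        abs_of_nonneg (mul_nonneg (abs_nonneg _) (mul_nonneg hm0.le hlam.le))]
    exact mul_left_cancel₀ (abs_ne_zero.mpr hβj) h1
  have hsame : ∑ i, θs i * X j i = ∑ i, σ i * X j i :=
    Finset.sum_congr rfl (fun i _ => by rw [hθσ i])
  rw [hsame, habsj] at hj
  exact lt_irrefl _ hj
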